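/- Let m < n. For every pair (A,B) of m×n complex matrices and every ε > 0, there exist m×n complex matrices (A',B') with |A_{ij} − A'_{ij}| < ε and |B_{ij} − B'_{ij}| < ε for all i,j, such that the pair (A',B') is equivalent to the pair ([I_m 0], [0 I_m]), where [I_m 0] is the m×n matrix whose first m columns form the identity I_m and whose remaining columns are zero, and [0 I_m] is the m×n matrix whose last m columns form the identity I_m and whose first n−m columns are zero. -/

import Mathlib

open Matrix

noncomputable section

/-- The `M × N` complex matrix obtained by placing the matrix `A` with its top-left corner
at (1-based) position `(ri+1, ci+1)` (i.e. with row offset `ri` and column offset `ci`),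
with all other entries zero.  Block-diagonal direct sums of (possibly rectangular) matrices
are expressed as sums of such placements along the diagonal. -/
def place {M N m n : ℕ} (ri ci : ℕ) (A : Matrix (Fin m) (Fin n) ℂ) :
    Matrix (Fin M) (Fin N) ℂ := fun i j =>
  if hi : ri ≤ (i : ℕ) ∧ (i : ℕ) < ri + m then
    if hj : ci ≤ (j : ℕ) ∧ (j : ℕ) < ci + n then
      A ⟨(i : ℕ) - ri, by omega⟩ ⟨(j : ℕ) - ci, by omega⟩
    else 0
  else 0

/-- The `r × (r-1)` matrix `F_r` with ones on the main diagonal and zeros elsewhere. -/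
def MatF (r : ℕ) : Matrix (Fin r) (Fin (r - 1)) ℂ :=
  fun i j => if (i : ℕ) = (j : ℕ) then 1 else 0

/-- The `r × (r-1)` matrix `K_r` with ones on the subdiagonal and zeros elsewhere. -/
def MatK (r : ℕ) : Matrix (Fin r) (Fin (r - 1)) ℂ :=
  fun i j => if (i : ℕ) = (j : ℕ) + 1 then 1 else 0

/-- The matrix unit `E_{a,b}` (1-based indices): entry `(a,b)` is `1`, all others `0`. -/
def Estd {M N : ℕ} (a b : ℕ) : Matrix (Fin M) (Fin N) ℂ :=
  fun i j => if (i : ℕ) + 1 = a ∧ (j : ℕ) + 1 = b then 1 else 0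

/-- Two pairs `(A₁, A₂)` and `(B₁, B₂)` of `m × n` complex matrices are equivalent if
`B₁ = R * A₁ * S` and `B₂ = R * A₂ * S` for some invertible `R`, `S`. -/
def PairEquiv {m n : ℕ} (A₁ A₂ B₁ B₂ : Matrix (Fin m) (Fin n) ℂ) : Prop :=
  ∃ (R : Matrix (Fin m) (Fin m) ℂ) (S : Matrix (Fin n) (Fin n) ℂ),
    IsUnit R ∧ IsUnit S ∧ B₁ = R * A₁ * S ∧ B₂ = R * A₂ * S



def Free (m d a b : ℕ) : Prop := a < d ∧ ∀ j, j < m → a + j*d < m → b + j*d < m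

instance (m d a b : ℕ) : Decidable (Free m d a b) := by unfold Free; infer_instance

def ceilq (m d b : ℕ) : ℕ := (m - b + d - 1)/d

def epiv (m d : ℕ) (c : ℕ × ℕ) : ℕ × ℕ :=
  if c.1 < d then (c.1 + (ceilq m d c.2 - 1)*d, c.2 + (ceilq m d c.2)*d) else (c.1 - d, c.2)

lemma ceilq_spec (m d b : ℕ) (hb : b < m) (hd : 0 < d) :
    1 ≤ ceilq m d b ∧ m ≤ b + (ceilq m d b)*d ∧ b + (ceilq m d b - 1)*d < m := by
  have h1 := Nat.div_add_mod (m - b + d - 1) d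
  have h2 : (m - b + d - 1) % d < d := Nat.mod_lt _ hd
  unfold ceilq
  rcases Nat.eq_zero_or_pos ((m - b + d - 1)/d) with h | h
  · rw [h] at h1 ⊢; omega
  · have e1 : ((m - b + d - 1)/d - 1) * d = d * ((m - b + d - 1)/d) - d := by
      rw [Nat.sub_mul, one_mul, Nat.mul_comm]
    have e2 : ((m - b + d - 1)/d) * d = d * ((m - b + d - 1)/d) := Nat.mul_comm _ _
    rw [e1, e2]
    generalize hx : d * ((m - b + d - 1)/d) = x at *
    omega

-- uniqueness of ceilq
lemma ceilq_eq (m d b q : ℕ) (hb : b < m) (hd : 0 < d) (hq1 : 1 ≤ q)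
    (hq2 : m ≤ b + q*d) (hq3 : b + (q-1)*d < m) : ceilq m d b = q := by
  obtain ⟨c1, c2, c3⟩ := ceilq_spec m d b hb hd
  set p := ceilq m d b
  by_contra hne
  rcases Nat.lt_or_ge p q with h | h
  · -- p < q : then p ≤ q - 1, so b + p*d ≤ b + (q-1)*d < m contradicts c2
    have : p*d ≤ (q-1)*d := Nat.mul_le_mul_right d (by omega)
    omega
  · have : q*d ≤ (p-1)*d := Nat.mul_le_mul_right d (by omega)
    omega

lemma epiv_keys (m d a b : ℕ) (ha : a < d) (ham : a < m) (hb : b < m)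
    (hnf : ¬ Free m d a b) (hd : 0 < d) :
    epiv m d (a,b) = (a + (ceilq m d b - 1)*d, b + (ceilq m d b)*d) ∧
      a + (ceilq m d b)*d < m := by
  constructor
  · simp [epiv, ha]
  · unfold Free at hnf
    push_neg at hnf
    obtain ⟨j₁, hj₁m, hj₁a, hj₁b⟩ := hnf ha
    obtain ⟨c1, c2, c3⟩ := ceilq_spec m d b hb hd
    have hqj : ceilq m d b ≤ j₁ := by
      by_contra hc
      have : j₁*d ≤ (ceilq m d b - 1)*d := Nat.mul_le_mul_right d (by omega)
      omega
    have : (ceilq m d b)*d ≤ j₁*d := Nat.mul_le_mul_right d hqj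
    omega

lemma epiv_surj (m d k j : ℕ) (hd : 0 < d) (hk : k + d < m) (hj : j < m + d) :
    ∃ a b : ℕ, a < m ∧ b < m ∧ ¬ Free m d a b ∧ epiv m d (a,b) = (k,j) := by
  rcases Nat.lt_or_ge j m with hjm | hjm
  · refine ⟨k+d, j, by omega, hjm, ?_, ?_⟩
    · unfold Free; push_neg; intro h; omega
    · simp [epiv, Nat.not_lt.mpr (Nat.le_add_left d k)]
  · -- j ≥ m
    have hmd := Nat.mod_add_div k d  -- k % d + d * (k / d) = k
    have hQd : (k/d + 1)*d = (k/d)*d + d := by rw [Nat.succ_mul]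
    have hdk : (k/d)*d = d * (k/d) := Nat.mul_comm _ _
    have hds : k/d ≤ k := Nat.div_le_self k d
    have hdd : k/d ≤ d * (k/d) := Nat.le_mul_of_pos_left _ hd
    have hQle : (k/d + 1)*d ≤ j := by omega
    refine ⟨k % d, j - (k/d + 1)*d, by omega, by omega, ?_, ?_⟩
    · unfold Free; push_neg
      intro _
      exact ⟨k/d + 1, by omega, by omega, by omega⟩
    · have hqq : ceilq m d (j - (k/d + 1)*d) = k/d + 1 := by
        have e3 : (k/d + 1 - 1) * d = (k/d) * d := by congr 1
        apply ceilq_eq m d (j - (k/d + 1)*d) (k/d + 1) (by omega) hd (Nat.succ_le_succ (Nat.zero_le _))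
          (by omega) (by rw [e3]; omega)
      have hlt : k % d < d := Nat.mod_lt _ hd
      simp only [epiv, hqq, hlt, if_pos]
      simp only [Nat.add_sub_cancel, Prod.mk.injEq]
      constructor <;> omega

lemma cascade (m d : ℕ) (hd : 0 < d) (y : ℕ → ℕ → ℂ)
    (hfree : ∀ a b, a < m → b < m → Free m d a b → y a b = 0)
    (h1 : ∀ k jc, k + d < m → jc < d → y (k+d) jc = 0)
    (h2 : ∀ k jc, k + d < m → d ≤ jc → jc < m → y (k+d) jc = y k (jc - d))
    (h3 : ∀ k i, k + d < m → m - d ≤ i → i < m → y k i = 0) :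
    ∀ a, a < m → ∀ b, b < m → y a b = 0 := by
  intro a
  induction a using Nat.strong_induction_on with
  | _ a IH =>
    intro ham b hbm
    rcases Nat.lt_or_ge a d with had | had
    · by_cases hF : Free m d a b
      · exact hfree a b ham hbm hF
      · obtain ⟨-, hqm⟩ := epiv_keys m d a b had ham hbm hF hd
        obtain ⟨c1, c2, c3⟩ := ceilq_spec m d b hbm hd
        set q := ceilq m d b with hq
        have hle2 : (q-1)*d + d = q*d := by
          have h0 : q*d = (q-1+1)*d := by congr 1; omega
          rw [h0, Nat.succ_mul]
        have chain : ∀ i, i ≤ q - 1 → y (a + i*d) (b + i*d) = y a b := by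
          intro i hi
          induction i with
          | zero => simp
          | succ i ih =>
            have hiq : i ≤ q - 1 := by omega
            have hsm : (i+1)*d = i*d + d := Nat.succ_mul _ _
            have hle : (i+1)*d ≤ (q-1)*d := Nat.mul_le_mul_right d (by omega)
            have e1 : y (a + (i+1)*d) (b + (i+1)*d)
                = y (a + i*d) ((b + (i+1)*d) - d) := by
              have := h2 (a + i*d) (b + (i+1)*d) (by omega) (by omega) (by omega)
              rw [← this]; congr 1; omega
            rw [e1]
            have e2 : (b + (i+1)*d) - d = b + i*d := by omega
            rw [e2]
            exact ih hiq
        have hstep : y (a + (q-1)*d) (b + (q-1)*d) = 0 :=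
          h3 (a + (q-1)*d) (b + (q-1)*d) (by omega) (by omega) (by omega)
        rw [← chain (q-1) le_rfl, hstep]
    · -- a ≥ d
      rcases Nat.lt_or_ge b d with hbd | hbd
      · have h := h1 (a - d) b (by omega) hbd
        have e : a - d + d = a := by omega
        rwa [e] at h
      · have e : a - d + d = a := by omega
        have h := h2 (a - d) b (by omega) hbd hbm
        rw [e] at h
        rw [h]
        exact IH (a - d) (by omega) (by omega) (b - d) (by omega)

open Polynomial

section Generic
variable {α : Type*} [CommRing α] {m n d : ℕ}

/-- extend a matrix by zero to all of ℕ × ℕ -/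
def Ahat (M : Matrix (Fin m) (Fin n) α) (b j : ℕ) : α :=
  if h : b < m ∧ j < n then M ⟨b, h.1⟩ ⟨j, h.2⟩ else 0

def Tmat (m n d : ℕ) (M N : Matrix (Fin m) (Fin n) α) :
    Matrix (Fin m × Fin m) (Fin m × Fin m) α := fun c₁ c₂ =>
  if Free m d (c₁.1 : ℕ) (c₁.2 : ℕ) then (if c₂ = c₁ then 1 else 0)
  else
    (if (c₂.1 : ℕ) = (epiv m d ((c₁.1 : ℕ), (c₁.2 : ℕ))).1 + d then
        Ahat M (c₂.2 : ℕ) (epiv m d ((c₁.1 : ℕ), (c₁.2 : ℕ))).2 else 0)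
    - (if (c₂.1 : ℕ) = (epiv m d ((c₁.1 : ℕ), (c₁.2 : ℕ))).1 then
        Ahat N (c₂.2 : ℕ) (epiv m d ((c₁.1 : ℕ), (c₁.2 : ℕ))).2 else 0)

def wvec (m d : ℕ) : Fin m × Fin m → α := fun c =>
  if Free m d (c.1 : ℕ) (c.2 : ℕ) then (if c.1 = c.2 then 1 else 0) else 0

lemma Tmat_mulVec_free (M N : Matrix (Fin m) (Fin n) α) (x : Fin m × Fin m → α)
    (c : Fin m × Fin m) (hF : Free m d (c.1 : ℕ) (c.2 : ℕ)) :
    (Tmat m n d M N).mulVec x c = x c := by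
  simp only [mulVec, dotProduct, Tmat, hF, if_true, ite_mul, one_mul, zero_mul]
  rw [Finset.sum_ite_eq' Finset.univ c x]
  simp

lemma Tmat_mulVec_nonfree (M N : Matrix (Fin m) (Fin n) α) (x : Fin m × Fin m → α)
    (c : Fin m × Fin m) (hF : ¬ Free m d (c.1 : ℕ) (c.2 : ℕ))
    (k j : ℕ) (he : epiv m d ((c.1 : ℕ), (c.2 : ℕ)) = (k, j))
    (hk : k + d < m) (hj : j < n) :
    (Tmat m n d M N).mulVec x c =
      (∑ b' : Fin m, M b' ⟨j, hj⟩ * x (⟨k + d, hk⟩, b'))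
      - (∑ b' : Fin m, N b' ⟨j, hj⟩ * x (⟨k, by omega⟩, b')) := by
  simp only [mulVec, dotProduct, Tmat, hF, if_false, he, sub_mul, ite_mul, zero_mul]
  rw [Fintype.sum_prod_type]
  simp only [Finset.sum_sub_distrib]
  congr 1
  · rw [Finset.sum_comm]
    apply Finset.sum_congr rfl
    intro b' _
    have hrw : ∀ a' : Fin m, ((a' : ℕ) = k + d) = (a' = (⟨k + d, hk⟩ : Fin m)) := by
      intro a'; simp [Fin.ext_iff]
    simp only [hrw]
    rw [Finset.sum_ite_eq' Finset.univ (⟨k + d, hk⟩ : Fin m)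
      (fun a' => Ahat M (b' : ℕ) j * x (a', b'))]
    simp only [Finset.mem_univ, if_true]
    congr 1
    unfold Ahat
    rw [dif_pos ⟨b'.isLt, hj⟩]
  · rw [Finset.sum_comm]
    apply Finset.sum_congr rfl
    intro b' _
    have hk' : k < m := by omega
    have hrw : ∀ a' : Fin m, ((a' : ℕ) = k) = (a' = (⟨k, hk'⟩ : Fin m)) := by
      intro a'; simp [Fin.ext_iff]
    simp only [hrw]
    rw [Finset.sum_ite_eq' Finset.univ (⟨k, hk'⟩ : Fin m)
      (fun a' => Ahat N (b' : ℕ) j * x (a', b'))]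
    simp only [Finset.mem_univ, if_true]
    congr 1
    unfold Ahat
    rw [dif_pos ⟨b'.isLt, hj⟩]

end Generic

section Canonical
variable (m n d : ℕ)

def Pmat : Matrix (Fin m) (Fin n) ℂ := place 0 0 (1 : Matrix (Fin m) (Fin m) ℂ)
def Qmat : Matrix (Fin m) (Fin n) ℂ := place 0 d (1 : Matrix (Fin m) (Fin m) ℂ)

lemma Pmat_apply (i : Fin m) (j : Fin n) :
    Pmat m n i j = if (j : ℕ) = (i : ℕ) then 1 else 0 := by
  unfold Pmat place
  simp only [Matrix.one_apply, Fin.ext_iff]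
  split_ifs <;> first | rfl | omega

lemma Qmat_apply (i : Fin m) (j : Fin n) :
    Qmat m n d i j = if (j : ℕ) = (i : ℕ) + d then 1 else 0 := by
  unfold Qmat place
  simp only [Matrix.one_apply, Fin.ext_iff]
  split_ifs <;> first | rfl | omega

lemma Pmat_sum (j : Fin n) (x : Fin m → ℂ) :
    (∑ b' : Fin m, Pmat m n b' j * x b') = if h : (j : ℕ) < m then x ⟨j, h⟩ else 0 := by
  split_ifs with h
  · have hrw : ∀ b' : Fin m, ((j : ℕ) = (b' : ℕ)) = (b' = ⟨j, h⟩) := by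
      intro b'
      simp only [Fin.ext_iff, eq_iff_iff]
      exact eq_comm
    simp only [Pmat_apply, hrw, ite_mul, one_mul, zero_mul]
    rw [Finset.sum_ite_eq' Finset.univ _ x]
    simp
  · have hz : ∀ b' : Fin m, Pmat m n b' j = 0 := by
      intro b'
      rw [Pmat_apply, if_neg]
      have := b'.isLt
      omega
    simp [hz]

lemma Qmat_sum (j : Fin n) (x : Fin m → ℂ) :
    (∑ b' : Fin m, Qmat m n d b' j * x b')
      = if h : d ≤ (j : ℕ) ∧ (j : ℕ) - d < m then x ⟨(j : ℕ) - d, h.2⟩ else 0 := by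
  split_ifs with h
  · have hrw : ∀ b' : Fin m, ((j : ℕ) = (b' : ℕ) + d) = (b' = ⟨(j : ℕ) - d, h.2⟩) := by
      intro b'
      simp only [Fin.ext_iff, eq_iff_iff]
      omega
    simp only [Qmat_apply, hrw, ite_mul, one_mul, zero_mul]
    rw [Finset.sum_ite_eq' Finset.univ _ x]
    simp
  · have hz : ∀ b' : Fin m, Qmat m n d b' j = 0 := by
      intro b'
      rw [Qmat_apply, if_neg]
      have := b'.isLt
      omega
    simp [hz]

lemma T0_inj (hd0 : 0 < d) (hmn : m + d = n) (x : Fin m × Fin m → ℂ)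
    (hx : (Tmat m n d (Pmat m n) (Qmat m n d)).mulVec x = 0) : x = 0 := by
  have heqn : ∀ k j (hk : k + d < m) (hj : j < n),
      (if h : j < m then x (⟨k + d, hk⟩, ⟨j, h⟩) else 0)
        = (if h : d ≤ j ∧ j - d < m then x (⟨k, by omega⟩, ⟨j - d, h.2⟩) else 0) := by
    intro k j hk hj
    obtain ⟨a, b, ham, hbm, hnf, he⟩ := epiv_surj m d k j hd0 hk (by omega)
    have h0 := congrFun hx (⟨a, ham⟩, ⟨b, hbm⟩)
    rw [Tmat_mulVec_nonfree _ _ x _ (by exact hnf) k j (by exact he) hk hj] at h0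
    simp only [Pi.zero_apply] at h0
    rw [Pmat_sum, Qmat_sum] at h0
    have := sub_eq_zero.mp h0
    convert this using 2
  -- build y and apply cascade
  set y : ℕ → ℕ → ℂ := fun a b => if h : a < m ∧ b < m then x (⟨a, h.1⟩, ⟨b, h.2⟩) else 0
    with hy
  have hcas : ∀ a, a < m → ∀ b, b < m → y a b = 0 := by
    apply cascade m d hd0 y
    · intro a b ham hbm hF
      have h0 := congrFun hx (⟨a, ham⟩, ⟨b, hbm⟩)
      rw [Tmat_mulVec_free _ _ x _ (by exact hF)] at h0
      simp only [Pi.zero_apply] at h0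
      simp only [hy]
      rw [dif_pos (show a < m ∧ b < m from ⟨ham, hbm⟩)]
      exact h0
    · intro k jc hk hjc
      have h := heqn k jc hk (by omega)
      rw [dif_pos (by omega : jc < m), dif_neg (by omega)] at h
      simp only [hy]
      rw [dif_pos (show k + d < m ∧ jc < m from ⟨hk, by omega⟩)]
      exact h
    · intro k jc hk hjc1 hjc2
      have h := heqn k jc hk (by omega)
      rw [dif_pos hjc2, dif_pos (show d ≤ jc ∧ jc - d < m from ⟨hjc1, by omega⟩)] at h
      simp only [hy]
      rw [dif_pos (show k + d < m ∧ jc < m from ⟨hk, hjc2⟩),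
        dif_pos (show k < m ∧ jc - d < m from ⟨by omega, by omega⟩)]
      exact h
    · intro k i hk hi1 hi2
      have h := heqn k (i + d) hk (by omega)
      rw [dif_neg (by omega), dif_pos (show d ≤ i + d ∧ i + d - d < m from ⟨by omega, by omega⟩)] at h
      simp only [Nat.add_sub_cancel] at h
      simp only [hy]
      rw [dif_pos (show k < m ∧ i < m from ⟨by omega, hi2⟩)]
      exact h.symm
  funext c
  have h := hcas (c.1 : ℕ) c.1.isLt (c.2 : ℕ) c.2.isLt
  simp only [hy] at h
  rw [dif_pos (show (c.1 : ℕ) < m ∧ (c.2 : ℕ) < m from ⟨c.1.isLt, c.2.isLt⟩)] at h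
  simpa using h

end Canonical

section Poly
variable (m n d : ℕ) (A B : Matrix (Fin m) (Fin n) ℂ)

def APm : Matrix (Fin m) (Fin n) (Polynomial ℂ) :=
  fun i j => C (Pmat m n i j) + X * C (A i j - Pmat m n i j)

def BQm : Matrix (Fin m) (Fin n) (Polynomial ℂ) :=
  fun i j => C (Qmat m n d i j) + X * C (B i j - Qmat m n d i j)

def TT : Matrix (Fin m × Fin m) (Fin m × Fin m) (Polynomial ℂ) :=
  Tmat m n d (APm m n A) (BQm m n d B)

def gh : (Fin m × Fin m) → Polynomial ℂ := (TT m n d A B).adjugate.mulVec (wvec m d)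

def GR : Matrix (Fin m) (Fin m) (Polynomial ℂ) := fun a b => gh m n d A B (a, b)

def S1R : Matrix (Fin n) (Fin n) (Polynomial ℂ) := fun r j =>
  if h : (r : ℕ) < m then (GR m n d A B * APm m n A) ⟨r, h⟩ j
  else if h2 : d ≤ (r : ℕ) ∧ (r : ℕ) - d < m then
    (GR m n d A B * BQm m n d B) ⟨(r : ℕ) - d, h2.2⟩ j
  else (if (r : ℕ) = (j : ℕ) then 1 else 0)

lemma hTgh : (TT m n d A B).mulVec (gh m n d A B)
    = (TT m n d A B).det • (wvec m d : Fin m × Fin m → Polynomial ℂ) := by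
  unfold gh
  rw [Matrix.mulVec_mulVec, Matrix.mul_adjugate, Matrix.smul_mulVec, Matrix.one_mulVec]

lemma epiv_lt (hd0 : 0 < d) (a b : ℕ) (ha : a < m) (hb : b < m) (hnf : ¬ Free m d a b) :
    (epiv m d (a, b)).1 + d < m ∧ (epiv m d (a, b)).2 < m + d := by
  rcases Nat.lt_or_ge a d with had | had
  · obtain ⟨he, hlt⟩ := epiv_keys m d a b had ha hb hnf hd0
    obtain ⟨c1, c2, c3⟩ := ceilq_spec m d b hb hd0
    rw [he]
    have hle2 : (ceilq m d b - 1)*d + d = (ceilq m d b)*d := by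
      have h0 : (ceilq m d b)*d = (ceilq m d b - 1 + 1)*d := by congr 1; omega
      rw [h0, Nat.succ_mul]
    constructor <;> omega
  · simp only [epiv, Nat.not_lt.mpr had, if_neg, if_false]
    constructor <;> omega

-- key intertwining equation over the polynomial ring
lemma key_eq (hd0 : 0 < d) (hmn : m + d = n) (k j : ℕ) (hk : k + d < m) (hj : j < n) :
    (GR m n d A B * APm m n A) ⟨k + d, hk⟩ ⟨j, hj⟩
      = (GR m n d A B * BQm m n d B) ⟨k, by omega⟩ ⟨j, hj⟩ := by
  obtain ⟨a, b, ham, hbm, hnf, he⟩ := epiv_surj m d k j hd0 hk (by omega)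
  have h0 := congrFun (hTgh m n d A B) (⟨a, ham⟩, ⟨b, hbm⟩)
  unfold TT at h0
  rw [Tmat_mulVec_nonfree _ _ _ _ (by exact hnf) k j (by exact he) hk hj] at h0
  have hw : (wvec m d : Fin m × Fin m → Polynomial ℂ) (⟨a, ham⟩, ⟨b, hbm⟩) = 0 := by
    unfold wvec
    rw [if_neg (by exact hnf)]
  rw [Pi.smul_apply, hw, smul_zero] at h0
  have h1 := sub_eq_zero.mp h0
  have e1 : (GR m n d A B * APm m n A) ⟨k + d, hk⟩ ⟨j, hj⟩
      = ∑ b' : Fin m, APm m n A b' ⟨j, hj⟩ * gh m n d A B (⟨k + d, hk⟩, b') := by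
    rw [Matrix.mul_apply]
    apply Finset.sum_congr rfl
    intro b' _
    rw [mul_comm]
    rfl
  have e2 : (GR m n d A B * BQm m n d B) ⟨k, by omega⟩ ⟨j, hj⟩
      = ∑ b' : Fin m, BQm m n d B b' ⟨j, hj⟩ * gh m n d A B (⟨k, by omega⟩, b') := by
    rw [Matrix.mul_apply]
    apply Finset.sum_congr rfl
    intro b' _
    rw [mul_comm]
    rfl
  rw [e1, e2]
  convert h1 using 3

end Poly



section Eval
variable (m n d : ℕ) (A B : Matrix (Fin m) (Fin n) ℂ)

lemma Ahat_map {m n : ℕ} (f : Polynomial ℂ →+* ℂ)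
    (M : Matrix (Fin m) (Fin n) (Polynomial ℂ)) (b j : ℕ) :
    f (Ahat M b j) = Ahat (M.map f) b j := by
  unfold Ahat
  split_ifs <;> simp [Matrix.map_apply]

lemma Tmat_map (f : Polynomial ℂ →+* ℂ) (M N : Matrix (Fin m) (Fin n) (Polynomial ℂ)) :
    (Tmat m n d M N).map f = Tmat m n d (M.map f) (N.map f) := by
  ext c₁ c₂
  rw [Matrix.map_apply]
  unfold Tmat
  by_cases h : Free m d (c₁.1 : ℕ) (c₁.2 : ℕ)
  · rw [if_pos h, if_pos h, apply_ite f, _root_.map_one, _root_.map_zero]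
  · rw [if_neg h, if_neg h, map_sub]
    congr 1 <;> rw [apply_ite f, map_zero, Ahat_map]

lemma mulVec_map {ι κ : Type*} [Fintype κ] (f : Polynomial ℂ →+* ℂ)
    (M : Matrix ι κ (Polynomial ℂ)) (x : κ → Polynomial ℂ) :
    (M.map f).mulVec (fun k => f (x k)) = fun i => f (M.mulVec x i) := by
  funext i
  simp [Matrix.mulVec, dotProduct, map_sum, _root_.map_mul]

lemma wvec_map (f : Polynomial ℂ →+* ℂ) :
    (fun c => f ((wvec m d : Fin m × Fin m → Polynomial ℂ) c))
      = (wvec m d : Fin m × Fin m → ℂ) := by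
  funext c
  unfold wvec
  split_ifs <;> simp

lemma APm_map_eval (t : ℂ) :
    (APm m n A).map (evalRingHom t)
      = fun i j => Pmat m n i j + t * (A i j - Pmat m n i j) := by
  funext i j
  simp [APm, Matrix.map_apply]

lemma BQm_map_eval (t : ℂ) :
    (BQm m n d B).map (evalRingHom t)
      = fun i j => Qmat m n d i j + t * (B i j - Qmat m n d i j) := by
  funext i j
  simp [BQm, Matrix.map_apply]

lemma APm_map_zero : (APm m n A).map (evalRingHom 0) = Pmat m n := by
  rw [APm_map_eval]
  funext i j
  simp

lemma BQm_map_zero : (BQm m n d B).map (evalRingHom 0) = Qmat m n d := by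
  rw [BQm_map_eval]
  funext i j
  simp

lemma detT0_ne (hd0 : 0 < d) (hmn : m + d = n) :
    (Tmat m n d (Pmat m n) (Qmat m n d)).det ≠ 0 := by
  intro h
  obtain ⟨v, hvne, hv⟩ := Matrix.exists_mulVec_eq_zero_iff.mpr h
  exact hvne (T0_inj m n d hd0 hmn v hv)

lemma T0_mulVec_delta (hd0 : 0 < d) (hmn : m + d = n) :
    (Tmat m n d (Pmat m n) (Qmat m n d)).mulVec
        (fun c => if c.1 = c.2 then (1 : ℂ) else 0) = wvec m d := by
  funext c
  by_cases hF : Free m d (c.1 : ℕ) (c.2 : ℕ)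
  · rw [Tmat_mulVec_free _ _ _ _ hF]
    unfold wvec
    rw [if_pos hF]
  · obtain ⟨h1, h2⟩ := epiv_lt m d hd0 (c.1 : ℕ) (c.2 : ℕ) c.1.isLt c.2.isLt hF
    rw [Tmat_mulVec_nonfree _ _ _ _ hF (epiv m d ((c.1 : ℕ), (c.2 : ℕ))).1
      (epiv m d ((c.1 : ℕ), (c.2 : ℕ))).2 Prod.mk.eta.symm h1 (by omega)]
    simp only [mul_ite, mul_one, mul_zero, Finset.sum_ite_eq, Finset.mem_univ, if_true]
    rw [Pmat_apply, Qmat_apply]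
    unfold wvec
    rw [if_neg hF]
    set j := (epiv m d ((c.1 : ℕ), (c.2 : ℕ))).2
    set k := (epiv m d ((c.1 : ℕ), (c.2 : ℕ))).1
    have : ((⟨j, by omega⟩ : Fin n) : ℕ) = j := rfl
    simp only [this]
    split_ifs <;> first | (exact sub_self _) | omega | simp

lemma gh_zero (hd0 : 0 < d) (hmn : m + d = n) :
    (fun c => eval 0 (gh m n d A B c))
      = fun c => (Tmat m n d (Pmat m n) (Qmat m n d)).det
          * (if c.1 = c.2 then (1 : ℂ) else 0) := by
  have hmap := congrArg (fun (v : (Fin m × Fin m) → Polynomial ℂ) =>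
      (fun c => (evalRingHom 0) (v c))) (hTgh m n d A B)
  rw [← mulVec_map] at hmap
  have hTT0 : (TT m n d A B).map (evalRingHom 0)
      = Tmat m n d (Pmat m n) (Qmat m n d) := by
    unfold TT
    rw [Tmat_map, APm_map_zero, BQm_map_zero]
  rw [hTT0] at hmap
  have hrhs : (fun c => (evalRingHom 0) (((TT m n d A B).det • (wvec m d :
      Fin m × Fin m → Polynomial ℂ)) c))
      = (Tmat m n d (Pmat m n) (Qmat m n d)).det • (wvec m d : Fin m × Fin m → ℂ) := by
    funext c
    simp only [Pi.smul_apply, smul_eq_mul, _root_.map_mul]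
    rw [RingHom.map_det, RingHom.mapMatrix_apply, hTT0]
    congr 1
    have := congrFun (wvec_map m d (evalRingHom 0)) c
    exact this
  rw [hrhs] at hmap
  -- hmap : T0.mulVec (eval0 ∘ gh) = det T0 • wvec
  have h2 : (Tmat m n d (Pmat m n) (Qmat m n d)).mulVec
      (fun c => (Tmat m n d (Pmat m n) (Qmat m n d)).det
        * (if c.1 = c.2 then (1 : ℂ) else 0))
      = (Tmat m n d (Pmat m n) (Qmat m n d)).det • (wvec m d : Fin m × Fin m → ℂ) := by
    have : (fun c => (Tmat m n d (Pmat m n) (Qmat m n d)).det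
        * (if c.1 = c.2 then (1 : ℂ) else 0))
        = (Tmat m n d (Pmat m n) (Qmat m n d)).det
          • (fun c : Fin m × Fin m => if c.1 = c.2 then (1 : ℂ) else 0) := rfl
    rw [this, Matrix.mulVec_smul, T0_mulVec_delta m n d hd0 hmn]
  have hdiff : (Tmat m n d (Pmat m n) (Qmat m n d)).mulVec
      ((fun c => eval 0 (gh m n d A B c)) - (fun c =>
        (Tmat m n d (Pmat m n) (Qmat m n d)).det * (if c.1 = c.2 then (1 : ℂ) else 0))) = 0 := by
    rw [Matrix.mulVec_sub]
    rw [show (fun c => eval 0 (gh m n d A B c)) = (fun c => (evalRingHom 0) (gh m n d A B c))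
      from rfl]
    rw [hmap, h2, sub_self]
  have := T0_inj m n d hd0 hmn _ hdiff
  funext c
  have h3 := congrFun this c
  simp only [Pi.sub_apply, Pi.zero_apply, sub_eq_zero] at h3
  exact h3

end Eval

section Final
variable (m n d : ℕ) (A B : Matrix (Fin m) (Fin n) ℂ)

lemma GR_map_zero (hd0 : 0 < d) (hmn : m + d = n) :
    (GR m n d A B).map (evalRingHom 0)
      = (Tmat m n d (Pmat m n) (Qmat m n d)).det • (1 : Matrix (Fin m) (Fin m) ℂ) := by
  ext a b
  have h := congrFun (gh_zero m n d A B hd0 hmn) (a, b)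
  simp only [Matrix.map_apply, Matrix.smul_apply, Matrix.one_apply, smul_eq_mul]
  exact h

lemma S1R_map_zero (hd0 : 0 < d) (hmn : m + d = n) :
    (S1R m n d A B).map (evalRingHom 0)
      = Matrix.diagonal (fun r : Fin n =>
          if (r : ℕ) < m ∨ d ≤ (r : ℕ) then (Tmat m n d (Pmat m n) (Qmat m n d)).det else 1) := by
  ext r j
  simp only [Matrix.map_apply]
  unfold S1R
  rw [apply_dite (evalRingHom 0), apply_dite (evalRingHom 0)]
  by_cases h : (r : ℕ) < m
  · rw [dif_pos h]
    have e0 : (evalRingHom 0) ((GR m n d A B * APm m n A) ⟨(r : ℕ), h⟩ j)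
        = (((GR m n d A B).map (evalRingHom 0)) * ((APm m n A).map (evalRingHom 0)))
            ⟨(r : ℕ), h⟩ j := by
      rw [← Matrix.map_mul]
      rfl
    have hvm : ((⟨(r : ℕ), h⟩ : Fin m) : ℕ) = (r : ℕ) := rfl
    rw [e0, GR_map_zero m n d A B hd0 hmn, APm_map_zero, Matrix.smul_mul, Matrix.one_mul,
      Matrix.smul_apply, Pmat_apply, Matrix.diagonal_apply, hvm]
    by_cases hj : (j : ℕ) = (r : ℕ)
    · rw [if_pos hj, if_pos (Fin.ext hj.symm), if_pos (by omega : (r : ℕ) < m ∨ d ≤ (r : ℕ))]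
      simp
    · rw [if_neg hj, if_neg (fun hc => hj (by rw [hc]))]
      simp
  · rw [dif_neg h]
    by_cases h2 : d ≤ (r : ℕ) ∧ (r : ℕ) - d < m
    · rw [dif_pos h2]
      have e0 : (evalRingHom 0) ((GR m n d A B * BQm m n d B) ⟨(r : ℕ) - d, h2.2⟩ j)
          = (((GR m n d A B).map (evalRingHom 0)) * ((BQm m n d B).map (evalRingHom 0)))
              ⟨(r : ℕ) - d, h2.2⟩ j := by
        rw [← Matrix.map_mul]
        rfl
      have hvm : ((⟨(r : ℕ) - d, h2.2⟩ : Fin m) : ℕ) = (r : ℕ) - d := rfl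
      rw [e0, GR_map_zero m n d A B hd0 hmn, BQm_map_zero, Matrix.smul_mul, Matrix.one_mul,
        Matrix.smul_apply, Qmat_apply, Matrix.diagonal_apply, hvm]
      by_cases hj : (j : ℕ) = (r : ℕ)
      · rw [if_pos (by omega : (j : ℕ) = (r : ℕ) - d + d), if_pos (Fin.ext hj.symm),
          if_pos (by omega : (r : ℕ) < m ∨ d ≤ (r : ℕ))]
        simp
      · rw [if_neg (by omega : ¬ (j : ℕ) = (r : ℕ) - d + d),
          if_neg (fun hc => hj (by rw [hc]))]
        simp
    · rw [dif_neg h2]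
      have hr : ¬ ((r : ℕ) < m ∨ d ≤ (r : ℕ)) := by
        have := r.isLt
        omega
      rw [Matrix.diagonal_apply, if_neg hr]
      rw [apply_ite (evalRingHom 0), _root_.map_one, _root_.map_zero]
      by_cases hj : r = j
      · rw [if_pos (by rw [hj]), if_pos hj]
      · rw [if_neg (fun hc => hj (Fin.ext hc)), if_neg hj]

def qpoly : Polynomial ℂ := (GR m n d A B).det * (S1R m n d A B).det

lemma qpoly_ne (hd0 : 0 < d) (hmn : m + d = n) : qpoly m n d A B ≠ 0 := by
  intro h
  have h0 : eval 0 (qpoly m n d A B) = 0 := by rw [h]; simp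
  unfold qpoly at h0
  rw [eval_mul] at h0
  have e1 : eval 0 (GR m n d A B).det = ((GR m n d A B).map (evalRingHom 0)).det := by
    rw [← Polynomial.coe_evalRingHom, RingHom.map_det, RingHom.mapMatrix_apply]
  have e2 : eval 0 (S1R m n d A B).det = ((S1R m n d A B).map (evalRingHom 0)).det := by
    rw [← Polynomial.coe_evalRingHom, RingHom.map_det, RingHom.mapMatrix_apply]
  rw [e1, e2, GR_map_zero m n d A B hd0 hmn, S1R_map_zero m n d A B hd0 hmn] at h0
  have hT := detT0_ne m n d hd0 hmn
  rw [Matrix.det_smul, Matrix.det_one, Matrix.det_diagonal] at h0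
  rcases mul_eq_zero.mp h0 with h1 | h1
  · rcases mul_eq_zero.mp h1 with h2 | h2
    · exact hT (pow_eq_zero_iff'.mp h2).1
    · exact one_ne_zero h2
  · obtain ⟨r, -, hr⟩ := Finset.prod_eq_zero_iff.mp h1
    revert hr
    split_ifs
    · exact hT
    · exact one_ne_zero

end Final

theorem generic_pencil_wide (m n : ℕ) (hmn : m < n) (A B : Matrix (Fin m) (Fin n) ℂ)
    (ε : ℝ) (hε : 0 < ε) :
    ∃ A' B' : Matrix (Fin m) (Fin n) ℂ,
      (∀ i j, ‖A i j - A' i j‖ < ε) ∧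
      (∀ i j, ‖B i j - B' i j‖ < ε) ∧
      PairEquiv A' B'
        (place 0 0 (1 : Matrix (Fin m) (Fin m) ℂ))
        (place 0 (n - m) (1 : Matrix (Fin m) (Fin m) ℂ)) := by
  set d := n - m with hdd
  have hd0 : 0 < d := by omega
  have hmn' : m + d = n := by omega
  -- entrywise bound
  set K : ℝ := ∑ i : Fin m, ∑ j : Fin n,
      (‖A i j - Pmat m n i j‖ + ‖B i j - Qmat m n d i j‖) with hKdef
  have hK0 : 0 ≤ K :=
    Finset.sum_nonneg (fun i _ => Finset.sum_nonneg (fun j _ => by positivity))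
  have hKb : ∀ (i : Fin m) (j : Fin n),
      ‖A i j - Pmat m n i j‖ ≤ K ∧ ‖B i j - Qmat m n d i j‖ ≤ K := by
    intro i j
    have hin : (‖A i j - Pmat m n i j‖ + ‖B i j - Qmat m n d i j‖)
        ≤ ∑ j' : Fin n, (‖A i j' - Pmat m n i j'‖
            + ‖B i j' - Qmat m n d i j'‖) :=
      Finset.single_le_sum (f := fun j' => ‖A i j' - Pmat m n i j'‖
            + ‖B i j' - Qmat m n d i j'‖)
        (fun j' _ => by positivity) (Finset.mem_univ j)
    have hout : (∑ j' : Fin n, (‖A i j' - Pmat m n i j'‖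
            + ‖B i j' - Qmat m n d i j'‖)) ≤ K := by
      rw [hKdef]
      exact Finset.single_le_sum
        (f := fun i' => ∑ j' : Fin n, (‖A i' j' - Pmat m n i' j'‖
            + ‖B i' j' - Qmat m n d i' j'‖))
        (fun i' _ => Finset.sum_nonneg (fun j' _ => by positivity)) (Finset.mem_univ i)
    have h1 := norm_nonneg (A i j - Pmat m n i j)
    have h2 := norm_nonneg (B i j - Qmat m n d i j)
    constructor <;> linarith
  set δ : ℝ := ε / (K + 1) with hdel
  have hδ0 : 0 < δ := div_pos hε (by linarith)
  -- pick the parameter t = 1 + s with s real small, avoiding the roots of qpoly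
  have hq := qpoly_ne m n d A B hd0 hmn'
  have hfin := Polynomial.finite_setOf_isRoot hq
  have hinj : Set.InjOn (fun s : ℝ => (1 : ℂ) + (s : ℂ)) (Set.Ioo 0 δ) := by
    intro s1 _ s2 _ h
    simp only [add_right_inj, Complex.ofReal_inj] at h
    exact h
  have himg : ((fun s : ℝ => (1 : ℂ) + (s : ℂ)) '' (Set.Ioo 0 δ)).Infinite :=
    (Set.Ioo_infinite hδ0).image hinj
  obtain ⟨t, htmem, htroot⟩ := (himg.diff hfin).nonempty
  obtain ⟨s, hs, rfl⟩ := htmem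
  set t : ℂ := (1 : ℂ) + (s : ℂ) with ht
  have hteval : eval t (qpoly m n d A B) ≠ 0 := by
    intro h
    exact htroot h
  -- the perturbed pair
  set A' : Matrix (Fin m) (Fin n) ℂ := (APm m n A).map (evalRingHom t) with hA'
  set B' : Matrix (Fin m) (Fin n) ℂ := (BQm m n d B).map (evalRingHom t) with hB'
  have hA'app : ∀ i j, A' i j = Pmat m n i j + t * (A i j - Pmat m n i j) := by
    intro i j
    rw [hA', APm_map_eval]
  have hB'app : ∀ i j, B' i j = Qmat m n d i j + t * (B i j - Qmat m n d i j) := by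
    intro i j
    rw [hB', BQm_map_eval]
  have habs : ‖1 - t‖ = s := by
    rw [ht]
    have : (1 : ℂ) - (1 + (s : ℂ)) = -(s : ℂ) := by ring
    rw [this, norm_neg, Complex.norm_of_nonneg hs.1.le]
  have hboundA : ∀ i j, ‖A i j - A' i j‖ < ε := by
    intro i j
    have e : A i j - A' i j = (1 - t) * (A i j - Pmat m n i j) := by
      rw [hA'app]; ring
    rw [e, norm_mul, habs]
    have h1 := (hKb i j).1
    have h2 := norm_nonneg (A i j - Pmat m n i j)
    have hched : δ * (K + 1) = ε := div_mul_cancel₀ ε (by linarith)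
    nlinarith [hs.1, hs.2]
  have hboundB : ∀ i j, ‖B i j - B' i j‖ < ε := by
    intro i j
    have e : B i j - B' i j = (1 - t) * (B i j - Qmat m n d i j) := by
      rw [hB'app]; ring
    rw [e, norm_mul, habs]
    have h1 := (hKb i j).2
    have h2 := norm_nonneg (B i j - Qmat m n d i j)
    have hched : δ * (K + 1) = ε := div_mul_cancel₀ ε (by linarith)
    nlinarith [hs.1, hs.2]
  -- the transforming matrices
  set Gm : Matrix (Fin m) (Fin m) ℂ := (GR m n d A B).map (evalRingHom t) with hGm
  set S1 : Matrix (Fin n) (Fin n) ℂ := (S1R m n d A B).map (evalRingHom t) with hS1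
  have hed : eval t (qpoly m n d A B) = Gm.det * S1.det := by
    unfold qpoly
    rw [eval_mul]
    congr 1
    · rw [← Polynomial.coe_evalRingHom, RingHom.map_det, RingHom.mapMatrix_apply, hGm]
    · rw [← Polynomial.coe_evalRingHom, RingHom.map_det, RingHom.mapMatrix_apply, hS1]
  have hdetG : Gm.det ≠ 0 := by
    intro h
    rw [hed, h, zero_mul] at hteval
    exact hteval rfl
  have hdetS : S1.det ≠ 0 := by
    intro h
    rw [hed, h, mul_zero] at hteval
    exact hteval rfl
  have hSdetu : IsUnit S1.det := isUnit_iff_ne_zero.mpr hdetS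
  -- the two intertwining identities
  have hPS : Pmat m n * S1 = Gm * A' := by
    ext i j
    rw [Matrix.mul_apply]
    have hi : (i : ℕ) < n := by omega
    have hrw : ∀ k : Fin n, (Pmat m n i k) = if k = ⟨(i : ℕ), hi⟩ then 1 else 0 := by
      intro k
      rw [Pmat_apply]
      congr 1
      simp [Fin.ext_iff, eq_comm]
    simp only [hrw, ite_mul, one_mul, zero_mul]
    rw [Finset.sum_ite_eq' Finset.univ _ (fun k => S1 k j)]
    rw [if_pos (Finset.mem_univ _)]
    rw [hS1]
    simp only [Matrix.map_apply]
    unfold S1R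
    rw [dif_pos (show ((⟨(i : ℕ), hi⟩ : Fin n) : ℕ) < m from i.isLt)]
    rw [show (evalRingHom t) ((GR m n d A B * APm m n A) ⟨(i : ℕ), i.isLt⟩ j)
        = ((GR m n d A B * APm m n A).map (evalRingHom t)) ⟨(i : ℕ), i.isLt⟩ j from rfl]
    rw [Matrix.map_mul]
  have hQS : Qmat m n d * S1 = Gm * B' := by
    ext i j
    rw [Matrix.mul_apply]
    have hi : (i : ℕ) + d < n := by omega
    have hrw : ∀ k : Fin n, (Qmat m n d i k) = if k = ⟨(i : ℕ) + d, hi⟩ then 1 else 0 := by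
      intro k
      rw [Qmat_apply]
      congr 1
      simp [Fin.ext_iff, eq_comm]
    simp only [hrw, ite_mul, one_mul, zero_mul]
    rw [Finset.sum_ite_eq' Finset.univ _ (fun k => S1 k j)]
    rw [if_pos (Finset.mem_univ _)]
    rw [hS1]
    simp only [Matrix.map_apply]
    unfold S1R
    by_cases hc : (i : ℕ) + d < m
    · rw [dif_pos (show ((⟨(i : ℕ) + d, hi⟩ : Fin n) : ℕ) < m from hc)]
      rw [show ((GR m n d A B * APm m n A) ⟨(i : ℕ) + d, hc⟩ j)
          = ((GR m n d A B * BQm m n d B) ⟨(i : ℕ), by omega⟩ j) from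
        key_eq m n d A B hd0 hmn' (i : ℕ) (j : ℕ) hc j.isLt]
      rw [show (evalRingHom t) ((GR m n d A B * BQm m n d B) ⟨(i : ℕ), i.isLt⟩ j)
          = ((GR m n d A B * BQm m n d B).map (evalRingHom t)) ⟨(i : ℕ), i.isLt⟩ j from rfl]
      rw [Matrix.map_mul]
    · rw [dif_neg (show ¬ ((⟨(i : ℕ) + d, hi⟩ : Fin n) : ℕ) < m from hc)]
      rw [dif_pos (show d ≤ ((⟨(i : ℕ) + d, hi⟩ : Fin n) : ℕ)
          ∧ ((⟨(i : ℕ) + d, hi⟩ : Fin n) : ℕ) - d < m from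
            ⟨by show d ≤ (i : ℕ) + d; omega, by show (i : ℕ) + d - d < m; omega⟩)]
      have hidx : ∀ (hh : ((⟨(i : ℕ) + d, hi⟩ : Fin n) : ℕ) - d < m),
          (GR m n d A B * BQm m n d B) ⟨((⟨(i : ℕ) + d, hi⟩ : Fin n) : ℕ) - d, hh⟩ j
            = (GR m n d A B * BQm m n d B) i j := by
        intro hh
        have he : (⟨((⟨(i : ℕ) + d, hi⟩ : Fin n) : ℕ) - d, hh⟩ : Fin m) = i := by
          apply Fin.ext
          show (i : ℕ) + d - d = (i : ℕ)
          omega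
        rw [he]
      rw [hidx]
      rw [show (evalRingHom t) ((GR m n d A B * BQm m n d B) i j)
          = ((GR m n d A B * BQm m n d B).map (evalRingHom t)) i j from rfl]
      rw [Matrix.map_mul]
  -- assemble
  refine ⟨A', B', hboundA, hboundB, Gm, S1⁻¹, ?_, ?_, ?_, ?_⟩
  · exact (Matrix.isUnit_iff_isUnit_det _).mpr (isUnit_iff_ne_zero.mpr hdetG)
  · apply (Matrix.isUnit_iff_isUnit_det _).mpr
    rw [Matrix.det_nonsing_inv, Ring.inverse_eq_inv]
    exact isUnit_iff_ne_zero.mpr (inv_ne_zero hdetS)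
  · rw [show place 0 0 (1 : Matrix (Fin m) (Fin m) ℂ) = Pmat m n from rfl]
    rw [← hPS, Matrix.mul_nonsing_inv_cancel_right _ _ hSdetu]
  · rw [show place 0 (n - m) (1 : Matrix (Fin m) (Fin m) ℂ) = Qmat m n d from rfl]
    rw [← hQS, Matrix.mul_nonsing_inv_cancel_right _ _ hSdetu]
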